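/- Let F be a field of characteristic 0 and let a, b ∈ F× be such that the quadratic form a x₁² + b x₂² + ab x₃² over F is equivalent to the form x₁² + x₂² + x₃². Then the quaternion algebras (-a, -b)_F and (-1, -1)_F are isomorphic as F-algebras. -/

import Mathlib

theorem stmt15 (F : Type) [Field F] [CharZero F] (a b : F) (ha : a ≠ 0) (hb : b ≠ 0)
    (hform : (QuadraticMap.weightedSumSquares F ![a, b, a * b]).Equivalent
      (QuadraticMap.weightedSumSquares F ![(1 : F), 1, 1])) :
    Nonempty (QuaternionAlgebra F (-a) 0 (-b) ≃ₐ[F] QuaternionAlgebra F (-1) 0 (-1)) := by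
  obtain ⟨e⟩ := hform
  have hQ2 : ∀ v : Fin 3 → F, QuadraticMap.weightedSumSquares F ![(1 : F), 1, 1] v
      = v 0 * v 0 + v 1 * v 1 + v 2 * v 2 := by
    intro v
    simp [QuadraticMap.weightedSumSquares_apply, Fin.sum_univ_three]
  have hQ1 : ∀ v : Fin 3 → F, QuadraticMap.weightedSumSquares F ![a, b, a * b] v
      = a * (v 0 * v 0) + b * (v 1 * v 1) + a * b * (v 2 * v 2) := by
    intro v
    simp [QuadraticMap.weightedSumSquares_apply, Fin.sum_univ_three]
  set u : Fin 3 → F := e ![1, 0, 0] with hu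
  set v : Fin 3 → F := e ![0, 1, 0] with hv
  have huu : u 0 * u 0 + u 1 * u 1 + u 2 * u 2 = a := by
    have := e.map_app ![1, 0, 0]
    rw [hQ2, hQ1] at this
    simpa using this
  have hvv : v 0 * v 0 + v 1 * v 1 + v 2 * v 2 = b := by
    have := e.map_app ![0, 1, 0]
    rw [hQ2, hQ1] at this
    simpa using this
  have huv : u 0 * v 0 + u 1 * v 1 + u 2 * v 2 = 0 := by
    have h1 := e.map_app (![1, 0, 0] + ![0, 1, 0])
    rw [hQ2, hQ1, map_add] at h1
    have h2 : ∀ i : Fin 3, (e ![1,0,0] + e ![0,1,0]) i = u i + v i := fun i => rfl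
    rw [h2 0, h2 1, h2 2] at h1
    have hab : (![1,0,0] + ![0,1,0] : Fin 3 → F) = ![1,1,0] := by
      funext i; fin_cases i <;> simp
    rw [hab] at h1
    simp at h1
    have h3 : 2 * (u 0 * v 0 + u 1 * v 1 + u 2 * v 2) = 0 := by
      linear_combination h1 - huu - hvv
    have := mul_eq_zero.mp h3
    simpa using this
  -- construct the quaternion basis inside ℍ[F,-1,-1]
  set i' : QuaternionAlgebra F (-1) 0 (-1) := ⟨0, u 0, u 1, u 2⟩ with hi'
  set j' : QuaternionAlgebra F (-1) 0 (-1) := ⟨0, v 0, v 1, v 2⟩ with hj'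
  have hk : i' * j' = (⟨0, u 1 * v 2 - u 2 * v 1, u 2 * v 0 - u 0 * v 2,
      u 0 * v 1 - u 1 * v 0⟩ : QuaternionAlgebra F (-1) 0 (-1)) := by
    ext <;> simp [hi', hj'] <;> ring_nf
    · linear_combination -huv
  have hii : i' * i' = (-a) • (1 : QuaternionAlgebra F (-1) 0 (-1)) := by
    ext <;> simp [hi'] <;> ring_nf
    · linear_combination -huu
  have hjj : j' * j' = (-b) • (1 : QuaternionAlgebra F (-1) 0 (-1)) := by
    ext <;> simp [hj'] <;> ring_nf
    · linear_combination -hvv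
  have hji : j' * i' = -(i' * j') := by
    ext <;> simp [hi', hj'] <;> ring_nf
    · linear_combination -2 * huv
  set B : QuaternionAlgebra.Basis (QuaternionAlgebra F (-1) 0 (-1)) (-a) 0 (-b) :=
    ⟨i', j', i' * j', by rw [hii, zero_smul, add_zero], hjj, rfl, by rw [hji, zero_smul, zero_sub]⟩ with hB
  set f := B.liftHom with hf
  have hfx : ∀ x : QuaternionAlgebra F (-a) 0 (-b),
      f x = algebraMap F _ x.re + x.imI • i' + x.imJ • j' + x.imK • (i' * j') := by
    intro x; rfl
  have hinj : Function.Injective f := by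
    rw [injective_iff_map_eq_zero]
    intro x hx
    rw [hfx x, hk] at hx
    rw [QuaternionAlgebra.ext_iff] at hx
    obtain ⟨h0, h1, h2, h3⟩ := hx
    simp [hi', hj', QuaternionAlgebra.re_smul] at h0 h1 h2 h3
    have hA : a * x.imI = 0 := by
      linear_combination u 0 * h1 + u 1 * h2 + u 2 * h3 - x.imI * huu - x.imJ * huv
    have hBq : b * x.imJ = 0 := by
      linear_combination v 0 * h1 + v 1 * h2 + v 2 * h3 - x.imI * huv - x.imJ * hvv
    have hC : a * b * x.imK = 0 := by
      linear_combination (u 1 * v 2 - u 2 * v 1) * h1 + (u 2 * v 0 - u 0 * v 2) * h2 +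
        (u 0 * v 1 - u 1 * v 0) * h3 -
        x.imK * ((v 0 * v 0 + v 1 * v 1 + v 2 * v 2) * huu + a * hvv -
          (u 0 * v 0 + u 1 * v 1 + u 2 * v 2) * huv)
    have hI : x.imI = 0 := by
      rcases mul_eq_zero.mp hA with h | h
      · exact absurd h ha
      · exact h
    have hJ : x.imJ = 0 := by
      rcases mul_eq_zero.mp hBq with h | h
      · exact absurd h hb
      · exact h
    have hK : x.imK = 0 := by
      have := mul_eq_zero.mp hC
      rcases this with h | h
      · exact absurd h (mul_ne_zero ha hb)
      · exact h
    ext <;> simp [h0, hI, hJ, hK]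
  have hdim : Module.finrank F (QuaternionAlgebra F (-a) 0 (-b))
      = Module.finrank F (QuaternionAlgebra F (-1) 0 (-1)) := by
    rw [QuaternionAlgebra.finrank_eq_four, QuaternionAlgebra.finrank_eq_four]
  have hsurj : Function.Surjective f := by
    have := (LinearMap.injective_iff_surjective_of_finrank_eq_finrank
      (f := f.toLinearMap) hdim).mp hinj
    exact this
  exact ⟨AlgEquiv.ofBijective f ⟨hinj, hsurj⟩⟩
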